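/- arXiv:0912.3701 — 5 statements merged into one kernel-verified Lean document; each statement's English description precedes it below -/
import Mathlib

section
/- The Jucys–Murphy elements of the A-type Hecke algebra pairwise commute: for all i, j with 1 ≤ i, j ≤ n, y_i · y_j = y_j · y_i in H_n(q). -/
open FreeAlgebra in
/-- Defining relations of the A-type Hecke algebra `H_n(q)` on generators
`σ_1, …, σ_{n-1}` (generator `i : Fin (n-1)` represents `σ_{i+1}`). -/
inductive HeckeRel (n : ℕ) (q : ℂ) :
    FreeAlgebra ℂ (Fin (n - 1)) → FreeAlgebra ℂ (Fin (n - 1)) → Prop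
  | braid (i j : Fin (n - 1)) (h : (i : ℕ) + 1 = (j : ℕ)) :
      HeckeRel n q (ι ℂ i * ι ℂ j * ι ℂ i) (ι ℂ j * ι ℂ i * ι ℂ j)
  | comm (i j : Fin (n - 1)) (h : (i : ℕ) + 1 < (j : ℕ)) :
      HeckeRel n q (ι ℂ i * ι ℂ j) (ι ℂ j * ι ℂ i)
  | quad (i : Fin (n - 1)) :
      HeckeRel n q (ι ℂ i * ι ℂ i) (1 + (q - q⁻¹) • ι ℂ i)

/-- The A-type Hecke algebra `H_n(q)`. -/
abbrev HeckeAlgebra (n : ℕ) (q : ℂ) := RingQuot (HeckeRel n q)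

/-- The generator `σ_k` (1-based: valid for `1 ≤ k ≤ n-1`; junk value `1` otherwise). -/
noncomputable def heckeGen (n : ℕ) (q : ℂ) (k : ℕ) : HeckeAlgebra n q :=
  if h : k - 1 < n - 1 then RingQuot.mkAlgHom ℂ (HeckeRel n q) (FreeAlgebra.ι ℂ ⟨k - 1, h⟩)
  else 1

/-- The Jucys–Murphy elements, 1-based: `jm 1 = 1`, `jm (i+1) = σ_i * jm i * σ_i`. -/
noncomputable def jm (n : ℕ) (q : ℂ) : ℕ → HeckeAlgebra n q
  | 0 => 1
  | 1 => 1
  | (i + 2) => heckeGen n q (i + 1) * jm n q (i + 1) * heckeGen n q (i + 1)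

section MonoidHelpers

variable {M : Type*} [Monoid M]

private lemma braid_param {a b : M} (h : a * b * a = b * a * b) (z : M) :
    a * (b * (a * z)) = b * (a * (b * z)) := by
  calc a * (b * (a * z)) = (a * b * a) * z := by simp only [mul_assoc]
    _ = (b * a * b) * z := by rw [h]
    _ = b * (a * (b * z)) := by simp only [mul_assoc]

private lemma comm_param {y b : M} (h : y * b = b * y) (z : M) :
    y * (b * z) = b * (y * z) := by
  rw [← mul_assoc, h, mul_assoc]

private lemma q_param {a y : M} (h : y * (a * (y * a)) = a * (y * (a * y))) (z : M) :
    y * (a * (y * (a * z))) = a * (y * (a * (y * z))) := by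
  calc y * (a * (y * (a * z))) = (y * (a * (y * a))) * z := by simp only [mul_assoc]
    _ = (a * (y * (a * y))) * z := by rw [h]
    _ = a * (y * (a * (y * z))) := by simp only [mul_assoc]

end MonoidHelpers

variable {n : ℕ} {q : ℂ}

private lemma jm_succ (k : ℕ) (hk : 1 ≤ k) :
    jm n q (k + 1) = heckeGen n q k * jm n q k * heckeGen n q k := by
  cases k with
  | zero => omega
  | succ t => rfl

private lemma heckeGen_junk (k : ℕ) (h : ¬ k - 1 < n - 1) : heckeGen n q k = 1 := by
  rw [heckeGen, dif_neg h]

private lemma hecke_braid (k : ℕ) (hk : 1 ≤ k) (hkn : k < n - 1) :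
    heckeGen n q k * heckeGen n q (k + 1) * heckeGen n q k
      = heckeGen n q (k + 1) * heckeGen n q k * heckeGen n q (k + 1) := by
  have h2 : (k + 1) - 1 < n - 1 := by omega
  have h1 : k - 1 < n - 1 := by omega
  have hrel := RingQuot.mkAlgHom_rel (S := ℂ)
    (HeckeRel.braid (n := n) (q := q) ⟨k - 1, h1⟩ ⟨(k + 1) - 1, h2⟩ (by simp; omega))
  simp only [map_mul] at hrel
  simp only [heckeGen, dif_pos h1, dif_pos h2]
  exact hrel

private lemma hecke_comm (k m : ℕ) (hk : 1 ≤ k) (hkm : k + 2 ≤ m) :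
    Commute (heckeGen n q k) (heckeGen n q m) := by
  by_cases hm : m - 1 < n - 1
  · have hk' : k - 1 < n - 1 := by omega
    have hrel := RingQuot.mkAlgHom_rel (S := ℂ)
      (HeckeRel.comm (n := n) (q := q) ⟨k - 1, hk'⟩ ⟨m - 1, hm⟩ (by simp; omega))
    simp only [map_mul] at hrel
    unfold Commute SemiconjBy
    simp only [heckeGen, dif_pos hk', dif_pos hm]
    exact hrel
  · rw [heckeGen_junk m hm]
    exact Commute.one_right _

/-- `σ_k` commutes with `y_i` whenever `i + 1 ≤ k`. -/
private lemma gen_comm_jm (k : ℕ) : ∀ i, i + 1 ≤ k → Commute (heckeGen n q k) (jm n q i)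
  | 0, _ => by rw [show jm n q 0 = 1 from rfl]; exact Commute.one_right _
  | 1, _ => by rw [show jm n q 1 = 1 from rfl]; exact Commute.one_right _
  | (m + 2), h => by
    have h1 : Commute (heckeGen n q k) (heckeGen n q (m + 1)) :=
      (hecke_comm (m + 1) k (by omega) (by omega)).symm
    have h2 : Commute (heckeGen n q k) (jm n q (m + 1)) := gen_comm_jm k (m + 1) (by omega)
    show Commute _ (heckeGen n q (m + 1) * jm n q (m + 1) * heckeGen n q (m + 1))
    exact (h1.mul_right h2).mul_right h1

/-- Adjacent Jucys–Murphy elements commute. -/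
private lemma jm_comm_succ : ∀ i, jm n q i * jm n q (i + 1) = jm n q (i + 1) * jm n q i
  | 0 => by rw [show jm n q 0 = 1 from rfl, one_mul, mul_one]
  | 1 => by rw [show jm n q 1 = 1 from rfl, one_mul, mul_one]
  | (m + 2) => by
    by_cases hv : m + 1 < n - 1
    · -- both generators genuine; use the braid relation
      have ih := jm_comm_succ (m + 1)
      set a := heckeGen n q (m + 1) with ha
      set b := heckeGen n q (m + 2) with hb
      set y := jm n q (m + 1) with hy
      have hbr : a * b * a = b * a * b := hecke_braid (m + 1) (by omega) hv
      have hbr' : a * (b * a) = b * (a * b) := by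
        simpa only [mul_assoc] using hbr
      have hyb : y * b = b * y := (gen_comm_jm (m + 2) (m + 1) (by omega)).symm.eq
      have ih' : y * (a * (y * a)) = a * (y * (a * y)) := by
        have : y * (a * y * a) = (a * y * a) * y := ih
        simpa only [mul_assoc] using this
      show (a * y * a) * (b * (a * y * a) * b) = (b * (a * y * a) * b) * (a * y * a)
      simp only [mul_assoc]
      conv_lhs => rw [braid_param hbr, ← comm_param hyb, ← hbr', comm_param hyb,
        q_param ih', braid_param hbr]
      conv_rhs => rw [braid_param hbr, ← comm_param hyb, comm_param hyb]
    · -- σ_{m+2} is junk, so `jm (m+3) = jm (m+2)` and the claim is trivial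
      have hb1 : heckeGen n q (m + 2) = 1 := heckeGen_junk (m + 2) (by omega)
      show jm n q (m + 2) * (heckeGen n q (m + 2) * jm n q (m + 2) * heckeGen n q (m + 2))
          = (heckeGen n q (m + 2) * jm n q (m + 2) * heckeGen n q (m + 2)) * jm n q (m + 2)
      rw [hb1, one_mul, mul_one]

private lemma jm_comm_le (i j : ℕ) (h : i ≤ j) :
    Commute (jm n q i) (jm n q j) := by
  induction j, h using Nat.le_induction with
  | base => exact Commute.refl _
  | succ j hij ih =>
    rcases eq_or_lt_of_le hij with rfl | hlt
    · exact jm_comm_succ i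
    · have hj1 : 1 ≤ j := by omega
      have hg : Commute (jm n q i) (heckeGen n q j) :=
        (gen_comm_jm j i (by omega)).symm
      have hfin : Commute (jm n q i) (heckeGen n q j * jm n q j * heckeGen n q j) :=
        (hg.mul_right ih).mul_right hg
      rwa [← jm_succ j hj1] at hfin

/-- the Jucys–Murphy elements of `H_n(q)` pairwise commute. -/
theorem jm_commute (n : ℕ) (q : ℂ) (hn : 1 ≤ n) (hq : q ≠ 0) (i j : ℕ)
    (hi1 : 1 ≤ i) (hin : i ≤ n) (hj1 : 1 ≤ j) (hjn : j ≤ n) :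
    jm n q i * jm n q j = jm n q j * jm n q i := by
  rcases le_total i j with h | h
  · exact (jm_comm_le i j h).eq
  · exact ((jm_comm_le j i h).symm).eq
end

section
/- For every symmetric polynomial p ∈ ℂ[X_1, …, X_n], the element p(y_1, …, y_n) obtained by substituting the Jucys–Murphy elements lies in the center of the Hecke algebra H_n(q). -/
/-- Evaluation of a multivariate polynomial at the (pairwise commuting) Jucys–Murphy
elements `y_1, …, y_n`: monomials are evaluated as ordered products
`y_1^{m 1} ⋯ y_n^{m n}` (the order is immaterial since the `y_i` commute). -/
noncomputable def jmEval (n : ℕ) (q : ℂ) (p : MvPolynomial (Fin n) ℂ) :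
    HeckeAlgebra n q :=
  ∑ m ∈ p.support,
    MvPolynomial.coeff m p • (List.ofFn fun i : Fin n => jm n q ((i : ℕ) + 1) ^ m i).prod

namespace HeckeAux

/-! ### Abstract monoid computations -/

section Monoid
variable {M : Type*} [Monoid M] {s t a : M}

lemma braid_move (hb : s * t * s = t * s * t) (x : M) :
    s * (t * (s * x)) = t * (s * (t * x)) := by
  rw [← mul_assoc, ← mul_assoc, hb, mul_assoc, mul_assoc]

lemma braid_flip (hb : s * t * s = t * s * t) : t * (s * t) = s * (t * s) := by
  rw [← mul_assoc, ← hb, mul_assoc]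

lemma comm_move (hc : t * a = a * t) (x : M) : t * (a * x) = a * (t * x) := by
  rw [← mul_assoc, hc, mul_assoc]

lemma magic2 (hb : s * t * s = t * s * t) (hc : t * a = a * t) :
    s * (t * (s * a * s) * t) = t * (s * a * s) * t * s := by
  simp only [mul_assoc]
  rw [braid_move hb, comm_move hc, braid_flip hb]

lemma magic (hb : s * t * s = t * s * t) (hc : t * a = a * t)
    (hIH : a * (s * a * s) = s * a * s * a) :
    (s * a * s) * (t * (s * a * s) * t) = t * (s * a * s) * t * (s * a * s) := by
  have h3 : ∀ x, a * (s * (a * (s * x))) = s * (a * (s * (a * x))) := by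
    intro x
    have h := hIH
    simp only [mul_assoc] at h
    rw [show a * (s * (a * (s * x))) = a * (s * (a * s)) * x by simp only [mul_assoc], h]
    simp only [mul_assoc]
  simp only [mul_assoc]
  conv_lhs => rw [braid_move hb, comm_move hc, braid_flip hb, ← comm_move hc, h3]
  conv_rhs => rw [braid_move hb, comm_move hc, ← comm_move hc, ← braid_move hb]

end Monoid

/-! ### Hecke algebra relations -/

variable (n : ℕ) (q : ℂ)

lemma heckeGen_eq_one {k : ℕ} (h : ¬ (k - 1 < n - 1)) : heckeGen n q k = 1 := dif_neg h

lemma heckeGen_def {k : ℕ} (h : k - 1 < n - 1) :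
    heckeGen n q k = RingQuot.mkAlgHom ℂ (HeckeRel n q) (FreeAlgebra.ι ℂ ⟨k - 1, h⟩) :=
  dif_pos h

lemma quad (k : ℕ) (h : k - 1 < n - 1) :
    heckeGen n q k * heckeGen n q k = 1 + (q - q⁻¹) • heckeGen n q k := by
  rw [heckeGen_def n q h, ← map_mul,
    RingQuot.mkAlgHom_rel ℂ (HeckeRel.quad (q := q) ⟨k - 1, h⟩), map_add, map_one, map_smul]

lemma gen_comm (i j : ℕ) (h1 : 1 ≤ i) (h2 : i + 2 ≤ j) :
    Commute (heckeGen n q i) (heckeGen n q j) := by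
  by_cases hj : j - 1 < n - 1
  · have hi : i - 1 < n - 1 := by omega
    rw [heckeGen_def n q hi, heckeGen_def n q hj]
    unfold Commute SemiconjBy
    rw [← map_mul, ← map_mul,
      RingQuot.mkAlgHom_rel ℂ (HeckeRel.comm (q := q) ⟨i - 1, hi⟩ ⟨j - 1, hj⟩ (by simp; omega)),
      map_mul]
  · rw [heckeGen_eq_one n q hj]; exact Commute.one_right _

lemma gen_braid (k : ℕ) (h1 : 1 ≤ k) (h2 : k + 1 ≤ n - 1) :
    heckeGen n q k * heckeGen n q (k + 1) * heckeGen n q k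
      = heckeGen n q (k + 1) * heckeGen n q k * heckeGen n q (k + 1) := by
  have hk : k - 1 < n - 1 := by omega
  have hk1 : (k + 1) - 1 < n - 1 := by omega
  rw [heckeGen_def n q hk, heckeGen_def n q hk1, ← map_mul, ← map_mul, ← map_mul, ← map_mul,
    RingQuot.mkAlgHom_rel ℂ
      (HeckeRel.braid (q := q) ⟨k - 1, hk⟩ ⟨(k + 1) - 1, hk1⟩ (by simp; omega))]

lemma jm_succ (k : ℕ) (h : 1 ≤ k) :
    jm n q (k + 1) = heckeGen n q k * jm n q k * heckeGen n q k := by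
  match k with
  | 0 => omega
  | (i + 1) => rfl

lemma gen_jm_lt (m j : ℕ) (h : j < m) : Commute (heckeGen n q m) (jm n q j) := by
  induction j using Nat.twoStepInduction with
  | zero => exact Commute.one_right _
  | one => exact Commute.one_right _
  | more j ih ih2 =>
    show Commute _ (heckeGen n q (j + 1) * jm n q (j + 1) * heckeGen n q (j + 1))
    have hg : Commute (heckeGen n q m) (heckeGen n q (j + 1)) :=
      (gen_comm n q (j + 1) m (by omega) (by omega)).symm
    exact (hg.mul_right (ih2 (by omega))).mul_right hg

lemma gen_jm_gt (m j : ℕ) (h1 : 1 ≤ m) (h2 : m + 2 ≤ j) (h3 : j ≤ n) :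
    Commute (heckeGen n q m) (jm n q j) := by
  revert h3
  induction j, h2 using Nat.le_induction with
  | base =>
    intro _
    have e2 : jm n q (m + 2)
        = heckeGen n q (m + 1) * (heckeGen n q m * jm n q m * heckeGen n q m)
          * heckeGen n q (m + 1) := by
      show heckeGen n q (m + 1) * jm n q (m + 1) * heckeGen n q (m + 1) = _
      rw [jm_succ n q m h1]
    show heckeGen n q m * jm n q (m + 2) = jm n q (m + 2) * heckeGen n q m
    rw [e2]
    exact magic2 (gen_braid n q m h1 (by omega))
      ((gen_jm_lt n q (m + 1) m (by omega)).eq)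
  | succ j hj ih =>
    intro h3
    rw [jm_succ n q j (by omega)]
    have hg : Commute (heckeGen n q m) (heckeGen n q j) := gen_comm n q m j h1 hj
    exact (hg.mul_right (ih (by omega))).mul_right hg

lemma jm_adj (k : ℕ) : Commute (jm n q k) (jm n q (k + 1)) := by
  rcases Nat.eq_zero_or_pos k with rfl | hk
  · exact Commute.one_left _
  induction k, hk using Nat.le_induction with
  | base => exact Commute.one_left _
  | succ k hk ih =>
    by_cases hv : k < n - 1
    · have e1 : jm n q (k + 1) = heckeGen n q k * jm n q k * heckeGen n q k :=
        jm_succ n q k hk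
      have e2 : jm n q (k + 2) = heckeGen n q (k + 1)
          * (heckeGen n q k * jm n q k * heckeGen n q k) * heckeGen n q (k + 1) := by
        show heckeGen n q (k + 1) * jm n q (k + 1) * heckeGen n q (k + 1) = _
        rw [e1]
      show jm n q (k + 1) * jm n q (k + 2) = jm n q (k + 2) * jm n q (k + 1)
      rw [e1, e2]
      refine magic (gen_braid n q k hk (by omega))
        ((gen_jm_lt n q (k + 1) k (by omega)).eq) ?_
      have h := ih.eq
      rw [e1] at h
      exact h
    · have ht : heckeGen n q (k + 1) = 1 := heckeGen_eq_one n q (by omega)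
      have e2 : jm n q (k + 2) = jm n q (k + 1) := by
        show heckeGen n q (k + 1) * jm n q (k + 1) * heckeGen n q (k + 1) = _
        rw [ht, one_mul, mul_one]
      rw [e2]

lemma jm_comm_le (i j : ℕ) (h : i ≤ j) : Commute (jm n q i) (jm n q j) := by
  induction j, h using Nat.le_induction with
  | base => rfl
  | succ j hj ih =>
    rcases Nat.lt_or_ge i j with hij | hij
    · rcases Nat.eq_zero_or_pos j with rfl | hj1
      · omega
      rw [jm_succ n q j hj1]
      have hg : Commute (jm n q i) (heckeGen n q j) :=
        (gen_jm_lt n q j i hij).symm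
      exact (hg.mul_right ih).mul_right hg
    · have : i = j := le_antisymm hj hij
      subst this
      exact jm_adj n q i

lemma jm_comm (i j : ℕ) : Commute (jm n q i) (jm n q j) := by
  rcases le_total i j with h | h
  · exact jm_comm_le n q i j h
  · exact (jm_comm_le n q j i h).symm

lemma jm_cross1 (k : ℕ) (h1 : 1 ≤ k) (h : k - 1 < n - 1) :
    heckeGen n q k * jm n q (k + 1)
      = jm n q k * heckeGen n q k + (q - q⁻¹) • jm n q (k + 1) := by
  rw [jm_succ n q k h1, ← mul_assoc, ← mul_assoc, quad n q k h]
  simp only [add_mul, one_mul, smul_mul_assoc, mul_assoc]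

lemma jm_cross2 (k : ℕ) (h1 : 1 ≤ k) (h : k - 1 < n - 1) :
    jm n q (k + 1) * heckeGen n q k
      = heckeGen n q k * jm n q k + (q - q⁻¹) • jm n q (k + 1) := by
  rw [jm_succ n q k h1]
  have : heckeGen n q k * jm n q k * heckeGen n q k * heckeGen n q k
      = heckeGen n q k * jm n q k * (heckeGen n q k * heckeGen n q k) := by
    simp only [mul_assoc]
  rw [this, quad n q k h]
  simp only [mul_add, mul_one, mul_smul_comm, mul_assoc]

lemma sum_comm (k : ℕ) (h1 : 1 ≤ k) (h : k - 1 < n - 1) :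
    Commute (heckeGen n q k) (jm n q k + jm n q (k + 1)) := by
  have c1 := jm_cross1 n q k h1 h
  have c2 := jm_cross2 n q k h1 h
  have c2' : heckeGen n q k * jm n q k
      = jm n q (k + 1) * heckeGen n q k - (q - q⁻¹) • jm n q (k + 1) := by
    rw [eq_sub_iff_add_eq, ← c2]
  show heckeGen n q k * (jm n q k + jm n q (k + 1))
      = (jm n q k + jm n q (k + 1)) * heckeGen n q k
  rw [mul_add, add_mul, c1, c2']
  abel

lemma prod_comm (k : ℕ) (h1 : 1 ≤ k) :
    Commute (heckeGen n q k) (jm n q k * jm n q (k + 1)) := by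
  have e : jm n q (k + 1) = heckeGen n q k * jm n q k * heckeGen n q k := jm_succ n q k h1
  have hadj := (jm_comm n q k (k + 1)).eq
  rw [e] at hadj
  simp only [mul_assoc] at hadj
  -- hadj : jm k * (σ * (jm k * σ)) = σ * (jm k * (σ * jm k))
  have h2' : ∀ x, jm n q k * (heckeGen n q k * (jm n q k * (heckeGen n q k * x)))
      = heckeGen n q k * (jm n q k * (heckeGen n q k * (jm n q k * x))) := by
    intro x
    rw [show jm n q k * (heckeGen n q k * (jm n q k * (heckeGen n q k * x)))
        = jm n q k * (heckeGen n q k * (jm n q k * heckeGen n q k)) * x by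
          simp only [mul_assoc], hadj]
    simp only [mul_assoc]
  show heckeGen n q k * (jm n q k * jm n q (k + 1))
      = jm n q k * jm n q (k + 1) * heckeGen n q k
  rw [e]
  simp only [mul_assoc]
  conv_lhs => rw [hadj]
  conv_rhs => rw [h2', hadj]


/-! ### Polynomial side: swap-invariant polynomials -/

section Poly
open MvPolynomial

variable {n' : ℕ} (a b : Fin n')

/-- Generators: `X a + X b`, `X a * X b`, and the other variables. -/
def genSet : Set (MvPolynomial (Fin n') ℂ) :=
  {X a + X b, X a * X b} ∪ (X '' {j | j ≠ a ∧ j ≠ b})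

lemma e1_mem : X a + X b ∈ genSet a b := Or.inl (Set.mem_insert _ _)

lemma e2_mem : X a * X b ∈ genSet a b := Or.inl (by simp)

lemma X_mem {j : Fin n'} (hja : j ≠ a) (hjb : j ≠ b) : X j ∈ genSet a b :=
  Or.inr ⟨j, ⟨hja, hjb⟩, rfl⟩

lemma pow_sum_mem (d : ℕ) : X a ^ d + X b ^ d ∈ Algebra.adjoin ℂ (genSet a b) := by
  induction d using Nat.twoStepInduction with
  | zero => simpa using add_mem (one_mem _) (one_mem _)
  | one => simpa using Algebra.subset_adjoin (e1_mem a b)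
  | more d ih ih2 =>
    have e : (X a ^ (d + 2) + X b ^ (d + 2) : MvPolynomial (Fin n') ℂ)
        = (X a + X b) * (X a ^ (d + 1) + X b ^ (d + 1))
          - (X a * X b) * (X a ^ d + X b ^ d) := by ring
    rw [e]
    exact sub_mem (mul_mem (Algebra.subset_adjoin (e1_mem a b)) ih2)
      (mul_mem (Algebra.subset_adjoin (e2_mem a b)) ih)

lemma pair_mem_aux (s t : ℕ) (hst : s ≤ t) :
    X a ^ s * X b ^ t + X a ^ t * X b ^ s ∈ Algebra.adjoin ℂ (genSet a b) := by
  obtain ⟨d, rfl⟩ := Nat.exists_eq_add_of_le hst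
  have e : (X a ^ s * X b ^ (s + d) + X a ^ (s + d) * X b ^ s : MvPolynomial (Fin n') ℂ)
      = (X a * X b) ^ s * (X a ^ d + X b ^ d) := by ring
  rw [e]
  exact mul_mem (pow_mem (Algebra.subset_adjoin (e2_mem a b)) s) (pow_sum_mem a b d)

lemma pair_mem (s t : ℕ) :
    X a ^ s * X b ^ t + X a ^ t * X b ^ s ∈ Algebra.adjoin ℂ (genSet a b) := by
  rcases le_total s t with h | h
  · exact pair_mem_aux a b s t h
  · rw [add_comm]; exact pair_mem_aux a b t s h

lemma mono_pair_mem (hab : a ≠ b) (m : Fin n' →₀ ℕ) :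
    (monomial m 1 : MvPolynomial (Fin n') ℂ)
      + monomial (Finsupp.mapDomain (⇑(Equiv.swap a b)) m) 1
      ∈ Algebra.adjoin ℂ (genSet a b) := by
  classical
  set m' : Fin n' →₀ ℕ := (m.erase a).erase b with hm'
  have hm'a : m' a = 0 := by
    rw [hm', Finsupp.erase_ne hab, Finsupp.erase_same]
  have hm'b : m' b = 0 := by rw [hm', Finsupp.erase_same]
  have hm'j : ∀ j, j ≠ a → j ≠ b → m' j = m j := by
    intro j hja hjb
    rw [hm', Finsupp.erase_ne hjb, Finsupp.erase_ne hja]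
  have hsplit : m = m' + Finsupp.single a (m a) + Finsupp.single b (m b) := by
    ext j
    rcases eq_or_ne j a with rfl | hja
    · simp [hm'a, Finsupp.single_eq_of_ne (Ne.symm hab), hab]
    · rcases eq_or_ne j b with rfl | hjb
      · simp [hm'b, Finsupp.single_eq_of_ne' (Ne.symm hja)]
      · simp [hm'j j hja hjb, Finsupp.single_eq_of_ne' (Ne.symm hja),
          Finsupp.single_eq_of_ne' (Ne.symm hjb)]
  have hswap : Finsupp.mapDomain (⇑(Equiv.swap a b)) m
      = m' + Finsupp.single a (m b) + Finsupp.single b (m a) := by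
    ext j
    rw [show Finsupp.mapDomain (⇑(Equiv.swap a b)) m j = m ((Equiv.swap a b).symm j) from
      Finsupp.mapDomain_equiv_apply m j, Equiv.symm_swap]
    rcases eq_or_ne j a with rfl | hja
    · simp [hm'a, Equiv.swap_apply_left, Finsupp.single_eq_of_ne (Ne.symm hab), hab]
    · rcases eq_or_ne j b with rfl | hjb
      · simp [hm'b, Equiv.swap_apply_right, Finsupp.single_eq_of_ne' (Ne.symm hja)]
      · simp [hm'j j hja hjb, Equiv.swap_apply_of_ne_of_ne hja hjb,
          Finsupp.single_eq_of_ne' (Ne.symm hja), Finsupp.single_eq_of_ne' (Ne.symm hjb)]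
  have hm'mem : (monomial m' 1 : MvPolynomial (Fin n') ℂ) ∈ Algebra.adjoin ℂ (genSet a b) := by
    rw [monomial_eq, map_one, one_mul, Finsupp.prod]
    refine prod_mem fun i hi => pow_mem (Algebra.subset_adjoin (X_mem a b ?_ ?_)) _
    · rintro rfl; exact (Finsupp.mem_support_iff.mp hi) hm'a
    · rintro rfl; exact (Finsupp.mem_support_iff.mp hi) hm'b
  have key : ∀ u v : ℕ,
      (monomial (m' + Finsupp.single a u + Finsupp.single b v) 1 : MvPolynomial (Fin n') ℂ)
        = monomial m' 1 * (X a ^ u * X b ^ v) := by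
    intro u v
    rw [X_pow_eq_monomial, X_pow_eq_monomial, monomial_mul, monomial_mul, one_mul, one_mul,
      add_assoc]
  have g1 : (monomial m 1 : MvPolynomial (Fin n') ℂ)
      = monomial m' 1 * (X a ^ m a * X b ^ m b) := by
    conv_lhs => rw [hsplit]
    exact key (m a) (m b)
  have g2 : (monomial (Finsupp.mapDomain (⇑(Equiv.swap a b)) m) 1 : MvPolynomial (Fin n') ℂ)
      = monomial m' 1 * (X a ^ m b * X b ^ m a) := by
    rw [hswap]; exact key (m b) (m a)
  rw [g1, g2, ← mul_add]
  exact mul_mem hm'mem (pair_mem a b (m a) (m b))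

lemma swap_invariant_mem (hab : a ≠ b) (p : MvPolynomial (Fin n') ℂ)
    (hp : rename (⇑(Equiv.swap a b)) p = p) : p ∈ Algebra.adjoin ℂ (genSet a b) := by
  have key : ∀ r : MvPolynomial (Fin n') ℂ,
      r + rename (⇑(Equiv.swap a b)) r ∈ Algebra.adjoin ℂ (genSet a b) := by
    intro r
    induction r using MvPolynomial.induction_on' with
    | monomial m c =>
      rw [rename_monomial]
      have e : (monomial m c : MvPolynomial (Fin n') ℂ)
          + monomial (Finsupp.mapDomain (⇑(Equiv.swap a b)) m) c
          = c • ((monomial m 1 : MvPolynomial (Fin n') ℂ)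
              + monomial (Finsupp.mapDomain (⇑(Equiv.swap a b)) m) 1) := by
        rw [smul_add, MvPolynomial.smul_monomial, MvPolynomial.smul_monomial, smul_eq_mul,
          mul_one]
      rw [e]
      exact Subalgebra.smul_mem _ (mono_pair_mem a b hab m) c
    | add r1 r2 h1 h2 =>
      rw [map_add]
      have e : r1 + r2 + (rename (⇑(Equiv.swap a b)) r1 + rename (⇑(Equiv.swap a b)) r2)
          = (r1 + rename (⇑(Equiv.swap a b)) r1) + (r2 + rename (⇑(Equiv.swap a b)) r2) := by
        ring
      rw [e]
      exact add_mem h1 h2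
  have h2 := key p
  rw [hp] at h2
  have h3 := Subalgebra.smul_mem _ h2 ((2 : ℂ)⁻¹)
  rwa [show ((2 : ℂ)⁻¹) • (p + p) = p by
    rw [← two_smul ℂ p, smul_smul]; norm_num] at h3

end Poly

/-! ### Evaluation at the Jucys–Murphy elements -/

section Eval
open MvPolynomial

variable (n : ℕ) (q : ℂ)

noncomputable def ycom : Fin n → HeckeAlgebra n q := fun i => jm n q ((i : ℕ) + 1)

lemma ycom_comm : ∀ x ∈ Set.range (ycom n q), ∀ y ∈ Set.range (ycom n q), x * y = y * x := by
  rintro _ ⟨i, rfl⟩ _ ⟨j, rfl⟩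
  exact (jm_comm n q _ _).eq

noncomputable def psi : MvPolynomial (Fin n) ℂ →ₐ[ℂ] HeckeAlgebra n q :=
  letI : CommSemiring (Algebra.adjoin ℂ (Set.range (ycom n q))) :=
    Algebra.adjoinCommSemiringOfComm ℂ (ycom_comm n q)
  ((Algebra.adjoin ℂ (Set.range (ycom n q))).val).comp
    (MvPolynomial.aeval fun i : Fin n =>
      (⟨ycom n q i, Algebra.subset_adjoin ⟨i, rfl⟩⟩ :
        Algebra.adjoin ℂ (Set.range (ycom n q))))

lemma psi_X (j : Fin n) : psi n q (X j) = jm n q ((j : ℕ) + 1) := by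
  simp [psi, ycom]

lemma listProd_eq_finsuppProd {N : ℕ} {M : Type*} [CommMonoid M] (f : Fin N → M)
    (m : Fin N →₀ ℕ) :
    (List.ofFn fun i => f i ^ m i).prod = m.prod fun i k => f i ^ k := by
  rw [List.prod_ofFn, Finsupp.prod]
  exact (Finset.prod_subset (Finset.subset_univ _) fun i _ hi => by
    rw [Finsupp.notMem_support_iff.mp hi, pow_zero]).symm

lemma jmEval_eq (p : MvPolynomial (Fin n) ℂ) : jmEval n q p = psi n q p := by
  letI inst : CommSemiring (Algebra.adjoin ℂ (Set.range (ycom n q))) :=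
    Algebra.adjoinCommSemiringOfComm ℂ (ycom_comm n q)
  conv_rhs => rw [p.as_sum]
  rw [map_sum]
  unfold jmEval
  refine Finset.sum_congr rfl fun m _ => ?_
  have hpsi : psi n q (monomial m (coeff m p))
      = (Algebra.adjoin ℂ (Set.range (ycom n q))).val
          (algebraMap ℂ _ (coeff m p) * m.prod fun i k =>
            (⟨ycom n q i, Algebra.subset_adjoin ⟨i, rfl⟩⟩ :
              Algebra.adjoin ℂ (Set.range (ycom n q))) ^ k) := by
    rw [psi]
    simp only [AlgHom.coe_comp, Function.comp_apply, MvPolynomial.aeval_monomial]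
  rw [hpsi, map_mul, AlgHom.commutes, ← Algebra.smul_def]
  congr 1
  have h1 : (List.ofFn fun i : Fin n => jm n q ((i : ℕ) + 1) ^ m i)
      = (List.ofFn fun i : Fin n =>
          (⟨ycom n q i, Algebra.subset_adjoin ⟨i, rfl⟩⟩ :
            Algebra.adjoin ℂ (Set.range (ycom n q))) ^ m i).map
          (Algebra.adjoin ℂ (Set.range (ycom n q))).val := by
    rw [List.map_ofFn]; rfl
  rw [h1, ← map_list_prod]
  congr 1
  exact listProd_eq_finsuppProd _ m

end Eval


lemma gen_commute_jmEval (k : ℕ) (h1 : 1 ≤ k) (hk : k - 1 < n - 1)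
    (p : MvPolynomial (Fin n) ℂ) (hp : p.IsSymmetric) :
    Commute (heckeGen n q k) (jmEval n q p) := by
  have hka : k - 1 < n := by omega
  have hkb : k < n := by omega
  set a : Fin n := ⟨k - 1, hka⟩ with ha
  set b : Fin n := ⟨k, hkb⟩ with hb
  have hab : a ≠ b := by
    intro h; rw [Fin.ext_iff] at h; simp [ha, hb] at h; omega
  have hmem : p ∈ Algebra.adjoin ℂ (genSet a b) :=
    swap_invariant_mem a b hab p (hp (Equiv.swap a b))
  rw [jmEval_eq]
  have himg : psi n q p ∈ Algebra.adjoin ℂ (⇑(psi n q) '' genSet a b) := by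
    rw [← AlgHom.map_adjoin]
    exact Subalgebra.mem_map.mpr ⟨p, hmem, rfl⟩
  have hsub : Algebra.adjoin ℂ (⇑(psi n q) '' genSet a b)
      ≤ Subalgebra.centralizer ℂ {heckeGen n q k} := by
    rw [Algebra.adjoin_le_iff]
    rintro _ ⟨g, hg, rfl⟩
    rw [SetLike.mem_coe, Subalgebra.mem_centralizer_iff]
    rintro σ hσ
    rw [Set.mem_singleton_iff] at hσ
    subst hσ
    have e1 : (a : ℕ) + 1 = k := by simp [ha]; omega
    have e2 : (b : ℕ) + 1 = k + 1 := by simp [hb]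
    rcases hg with hg | ⟨j, ⟨hja, hjb⟩, rfl⟩
    · rcases hg with rfl | hg
      · rw [map_add, psi_X, psi_X, e1, e2]
        exact (sum_comm n q k h1 hk).eq
      · rw [Set.mem_singleton_iff] at hg
        subst hg
        rw [map_mul, psi_X, psi_X, e1, e2]
        exact (prod_comm n q k h1).eq
    · rw [psi_X]
      have hjn : (j : ℕ) < n := j.2
      have hne1 : (j : ℕ) + 1 ≠ k := by
        intro h; apply hja; rw [Fin.ext_iff]; simp [ha]; omega
      have hne2 : (j : ℕ) + 1 ≠ k + 1 := by
        intro h; apply hjb; rw [Fin.ext_iff]; simp [hb]; omega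
      rcases Nat.lt_or_ge ((j : ℕ) + 1) k with hlt | hge
      · exact (gen_jm_lt n q k ((j : ℕ) + 1) hlt).eq
      · exact (gen_jm_gt n q k ((j : ℕ) + 1) h1 (by omega) (by omega)).eq
  have hz := hsub himg
  rw [Subalgebra.mem_centralizer_iff] at hz
  exact hz _ (Set.mem_singleton _)

end HeckeAux

/-- every symmetric polynomial evaluated at the Jucys–Murphy elements
is central in `H_n(q)`. -/
theorem symm_poly_jm_central (n : ℕ) (q : ℂ) (hn : 1 ≤ n) (hq : q ≠ 0)
    (p : MvPolynomial (Fin n) ℂ) (hp : p.IsSymmetric) :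
    jmEval n q p ∈ Subalgebra.center ℂ (HeckeAlgebra n q) := by
  rw [Subalgebra.mem_center_iff]
  intro g
  have gen_top : Algebra.adjoin ℂ
      (Set.range fun i : Fin (n - 1) =>
        RingQuot.mkAlgHom ℂ (HeckeRel n q) (FreeAlgebra.ι ℂ i)) = ⊤ := by
    have h1 : (Set.range fun i : Fin (n - 1) =>
        RingQuot.mkAlgHom ℂ (HeckeRel n q) (FreeAlgebra.ι ℂ i))
        = ⇑(RingQuot.mkAlgHom ℂ (HeckeRel n q)) '' Set.range (FreeAlgebra.ι ℂ) := by
      rw [← Set.range_comp]; rfl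
    rw [h1, ← AlgHom.map_adjoin, FreeAlgebra.adjoin_range_ι, Algebra.map_top,
      AlgHom.range_eq_top]
    exact RingQuot.mkAlgHom_surjective ℂ _
  have hg : g ∈ Algebra.adjoin ℂ (Set.range fun i : Fin (n - 1) =>
      RingQuot.mkAlgHom ℂ (HeckeRel n q) (FreeAlgebra.ι ℂ i)) := by
    rw [gen_top]; exact Algebra.mem_top
  refine Algebra.adjoin_induction ?_ ?_ ?_ ?_ hg
  · rintro _ ⟨i, rfl⟩
    have hlt : ((i : ℕ) + 1) - 1 < n - 1 := by simpa using i.2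
    have e : RingQuot.mkAlgHom ℂ (HeckeRel n q) (FreeAlgebra.ι ℂ i)
        = heckeGen n q ((i : ℕ) + 1) := by
      rw [HeckeAux.heckeGen_def n q hlt]
      exact congrArg _ (congrArg _ (Fin.ext (by simp)))
    beta_reduce
    rw [e]
    exact (HeckeAux.gen_commute_jmEval n q ((i : ℕ) + 1) (by omega) hlt p hp).eq
  · intro r
    exact Algebra.commutes r _
  · intro x y _ _ hx hy
    rw [add_mul, mul_add, hx, hy]
  · intro x y _ _ hx hy
    rw [mul_assoc, hy, ← mul_assoc, hx, mul_assoc]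
end

section
/- The intertwining elements of H_n(q) satisfy the braid relation: U_{k+1} U_{k+2} U_{k+1} = U_{k+2} U_{k+1} U_{k+2} for each k with 1 ≤ k ≤ n−2. -/
/-- The intertwining element `U_{k+1} = σ_k y_k − y_k σ_k`. -/
noncomputable def heckeU (n : ℕ) (q : ℂ) (k : ℕ) : HeckeAlgebra n q :=
  heckeGen n q k * jm n q k - jm n q k * heckeGen n q k

/-! ### Auxiliary lemmas -/

lemma heckeGen_quad (n : ℕ) (q : ℂ) (k : ℕ) (hk : k - 1 < n - 1) :
    heckeGen n q k * heckeGen n q k = 1 + (q - q⁻¹) • heckeGen n q k := by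
  simp only [heckeGen, dif_pos hk]
  rw [← map_mul, RingQuot.mkAlgHom_rel _ (HeckeRel.quad ⟨k - 1, hk⟩), map_add, map_one, map_smul]

lemma heckeGen_braid (n : ℕ) (q : ℂ) (k : ℕ) (hk1 : 1 ≤ k) (hk : k < n - 1) :
    heckeGen n q k * heckeGen n q (k + 1) * heckeGen n q k =
      heckeGen n q (k + 1) * heckeGen n q k * heckeGen n q (k + 1) := by
  have h1 : k - 1 < n - 1 := by omega
  have h2 : (k + 1) - 1 < n - 1 := by omega
  simp only [heckeGen, dif_pos h1, dif_pos h2]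
  rw [← map_mul, ← map_mul, ← map_mul, ← map_mul,
    RingQuot.mkAlgHom_rel _ (HeckeRel.braid ⟨k - 1, h1⟩ ⟨(k + 1) - 1, h2⟩ (by simp; omega))]

lemma heckeGen_comm (n : ℕ) (q : ℂ) (j m : ℕ) (hj : 1 ≤ j) (hjm : j + 1 < m) :
    heckeGen n q j * heckeGen n q m = heckeGen n q m * heckeGen n q j := by
  by_cases hm : m - 1 < n - 1
  · have hjv : j - 1 < n - 1 := by omega
    simp only [heckeGen, dif_pos hjv, dif_pos hm]
    rw [← map_mul, ← map_mul,
      RingQuot.mkAlgHom_rel _ (HeckeRel.comm ⟨j - 1, hjv⟩ ⟨m - 1, hm⟩ (by simp; omega))]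
  · simp only [heckeGen, dif_neg hm, mul_one, one_mul]

lemma heckeGen_mul_jm (n : ℕ) (q : ℂ) (m : ℕ) :
    ∀ i, i < m → heckeGen n q m * jm n q i = jm n q i * heckeGen n q m
  | 0, _ => by simp [jm]
  | 1, _ => by simp [jm]
  | (i + 2), h => by
    have hg : heckeGen n q (i + 1) * heckeGen n q m = heckeGen n q m * heckeGen n q (i + 1) :=
      heckeGen_comm n q (i + 1) m (by omega) (by omega)
    have hj : heckeGen n q m * jm n q (i + 1) = jm n q (i + 1) * heckeGen n q m :=
      heckeGen_mul_jm n q m (i + 1) (by omega)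
    show heckeGen n q m * (heckeGen n q (i+1) * jm n q (i+1) * heckeGen n q (i+1)) =
      (heckeGen n q (i+1) * jm n q (i+1) * heckeGen n q (i+1)) * heckeGen n q m
    calc heckeGen n q m * (heckeGen n q (i+1) * jm n q (i+1) * heckeGen n q (i+1))
        = (heckeGen n q m * heckeGen n q (i+1)) * (jm n q (i+1) * heckeGen n q (i+1)) := by
          noncomm_ring
      _ = (heckeGen n q (i+1) * heckeGen n q m) * (jm n q (i+1) * heckeGen n q (i+1)) := by
          rw [← hg]
      _ = heckeGen n q (i+1) * (heckeGen n q m * jm n q (i+1)) * heckeGen n q (i+1) := by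
          noncomm_ring
      _ = heckeGen n q (i+1) * (jm n q (i+1) * heckeGen n q m) * heckeGen n q (i+1) := by
          rw [hj]
      _ = (heckeGen n q (i+1) * jm n q (i+1)) * (heckeGen n q m * heckeGen n q (i+1)) := by
          noncomm_ring
      _ = (heckeGen n q (i+1) * jm n q (i+1)) * (heckeGen n q (i+1) * heckeGen n q m) := by
          rw [← hg]
      _ = (heckeGen n q (i+1) * jm n q (i+1) * heckeGen n q (i+1)) * heckeGen n q m := by
          noncomm_ring

/-- Abstract computation for the inductive step of JM commutativity. -/
lemma comm_step {R : Type*} [Ring R] (s t z : R) (hb : s*t*s = t*s*t) (hc : t*z = z*t)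
    (hz : z*(s*z*s) = (s*z*s)*z) :
    (s*z*s)*(t*(s*z*s)*t) = (t*(s*z*s)*t)*(s*z*s) := by
  have hL : (s*z*s)*(t*(s*z*s)*t) = (s*t)*((s*z*s)*z)*(t*s) := by
    calc (s*z*s)*(t*(s*z*s)*t)
        = s*z*(s*t*s)*(z*(s*t)) := by noncomm_ring
      _ = s*z*(t*s*t)*(z*(s*t)) := by rw [hb]
      _ = (s*(z*t))*(s*(t*z))*(s*t) := by noncomm_ring
      _ = (s*(t*z))*(s*(t*z))*(s*t) := by rw [← hc]
      _ = (s*(t*z))*(s*(z*t))*(s*t) := by nth_rewrite 2 [hc]; rfl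
      _ = (s*t)*(z*s*z)*(t*s*t) := by noncomm_ring
      _ = (s*t)*(z*s*z)*(s*t*s) := by rw [← hb]
      _ = (s*t)*(z*(s*z*s))*(t*s) := by noncomm_ring
      _ = (s*t)*((s*z*s)*z)*(t*s) := by rw [hz]
  have hR : (t*(s*z*s)*t)*(s*z*s) = (s*t)*((s*z*s)*z)*(t*s) := by
    calc (t*(s*z*s)*t)*(s*z*s)
        = t*s*z*(s*t*s)*(z*s) := by noncomm_ring
      _ = t*s*z*(t*s*t)*(z*s) := by rw [hb]
      _ = (t*s)*(z*t)*(s*(t*z))*s := by noncomm_ring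
      _ = (t*s)*(t*z)*(s*(t*z))*s := by rw [← hc]
      _ = (t*s)*(t*z)*(s*(z*t))*s := by nth_rewrite 2 [hc]; rfl
      _ = (t*s*t)*(z*s*z)*(t*s) := by noncomm_ring
      _ = (s*t*s)*(z*s*z)*(t*s) := by rw [← hb]
      _ = (s*t)*((s*z*s)*z)*(t*s) := by noncomm_ring
  rw [hL, hR]

lemma jm_comm (n : ℕ) (q : ℂ) :
    ∀ k, jm n q k * jm n q (k + 1) = jm n q (k + 1) * jm n q k
  | 0 => by simp [jm]
  | 1 => by simp [jm]
  | (i + 2) => by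
    have hjm2 : jm n q (i + 2) =
        heckeGen n q (i+1) * jm n q (i+1) * heckeGen n q (i+1) := rfl
    have hjm3 : jm n q (i + 3) =
        heckeGen n q (i+2) * jm n q (i+2) * heckeGen n q (i+2) := rfl
    by_cases ht : (i + 2) - 1 < n - 1
    · have hb : heckeGen n q (i+1) * heckeGen n q (i+2) * heckeGen n q (i+1) =
          heckeGen n q (i+2) * heckeGen n q (i+1) * heckeGen n q (i+2) :=
        heckeGen_braid n q (i+1) (by omega) (by omega)
      have hc : heckeGen n q (i+2) * jm n q (i+1) = jm n q (i+1) * heckeGen n q (i+2) :=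
        heckeGen_mul_jm n q (i+2) (i+1) (by omega)
      have hz : jm n q (i+1) * (heckeGen n q (i+1) * jm n q (i+1) * heckeGen n q (i+1)) =
          (heckeGen n q (i+1) * jm n q (i+1) * heckeGen n q (i+1)) * jm n q (i+1) := by
        rw [← hjm2]; exact jm_comm n q (i+1)
      show jm n q (i+2) * jm n q (i+3) = jm n q (i+3) * jm n q (i+2)
      rw [hjm3, hjm2]
      exact comm_step _ _ _ hb hc hz
    · have ht1 : heckeGen n q (i + 2) = 1 := by
        simp only [heckeGen, dif_neg ht]
      rw [hjm3, ht1, one_mul, mul_one]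

/-- Bernstein–Lusztig style abstract braid computation for intertwiners. -/
lemma key {R : Type*} [Ring R] [Algebra ℂ R] (c : ℂ) (a b y p r : R)
    (ha2 : a*a = 1 + c•a) (hb2 : b*b = 1 + c•b)
    (hbr : a*b*a = b*a*b)
    (d1 : a*y = p*a - c•p)
    (d2 : a*p = y*a + c•p)
    (d3 : b*p = r*b - c•r)
    (d4 : b*r = p*b + c•r)
    (d5 : a*r = r*a)
    (d6 : b*y = y*b)
    (e1 : p*y = y*p) (e2 : r*y = y*r) (e3 : r*p = p*r) :
    (a*y - y*a) * (b*p - p*b) * (a*y - y*a) =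
      (b*p - p*b) * (a*y - y*a) * (b*p - p*b) := by
  have comp : ∀ u v w : R, u*v = w → ∀ x : R, u*(v*x) = w*x := fun u v w h x => by
    rw [← mul_assoc, h]
  have hbr' : ∀ x : R, a*(b*(a*x)) = b*(a*(b*x)) := fun x => by
    rw [← mul_assoc, ← mul_assoc, hbr, mul_assoc, mul_assoc]
  have hbr2 : a*(b*a) = b*(a*b) := by rw [← mul_assoc, hbr, mul_assoc]
  simp only [mul_sub, sub_mul, mul_add, add_mul, smul_mul_assoc, mul_smul_comm,
    smul_sub, smul_add, smul_smul, mul_assoc, mul_one, one_mul,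
    d1, comp _ _ _ d1, d2, comp _ _ _ d2, d3, comp _ _ _ d3, d4, comp _ _ _ d4,
    d5, comp _ _ _ d5, d6, comp _ _ _ d6, e1, comp _ _ _ e1, e2, comp _ _ _ e2,
    e3, comp _ _ _ e3, ha2, comp _ _ _ ha2, hb2, comp _ _ _ hb2, hbr, hbr', hbr2]
  module

/-- the intertwining elements satisfy the braid relation
`U_{k+1} U_{k+2} U_{k+1} = U_{k+2} U_{k+1} U_{k+2}`. -/
theorem heckeU_braid (n : ℕ) (q : ℂ) (hn : 1 ≤ n) (hq : q ≠ 0) (k : ℕ)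
    (hk1 : 1 ≤ k) (hkn : k ≤ n - 2) :
    heckeU n q k * heckeU n q (k + 1) * heckeU n q k =
      heckeU n q (k + 1) * heckeU n q k * heckeU n q (k + 1) := by
  have hn3 : 3 ≤ n := by omega
  set c : ℂ := q - q⁻¹ with hc
  set a := heckeGen n q k with haa
  set b := heckeGen n q (k+1) with hbb
  set y := jm n q k with hyy
  set p := jm n q (k+1) with hpp
  set r := jm n q (k+2) with hrr
  have hka : k - 1 < n - 1 := by omega
  have hkb : (k+1) - 1 < n - 1 := by omega
  have hp : p = a*y*a := by
    rw [hpp, haa, hyy]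
    obtain ⟨m, rfl⟩ : ∃ m, k = m + 1 := ⟨k - 1, by omega⟩
    rfl
  have hr : r = b*p*b := by rw [hrr, hbb, hpp]; rfl
  have ha2 : a*a = 1 + c•a := heckeGen_quad n q k hka
  have hb2 : b*b = 1 + c•b := heckeGen_quad n q (k+1) hkb
  have hbr : a*b*a = b*a*b := heckeGen_braid n q k hk1 (by omega)
  have d6 : b*y = y*b := heckeGen_mul_jm n q (k+1) k (by omega)
  have e1 : p*y = y*p := (jm_comm n q k).symm
  have e3 : r*p = p*r := (jm_comm n q (k+1)).symm
  have e2 : r*y = y*r := by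
    rw [hr]
    calc (b*p*b)*y = b*p*(b*y) := by noncomm_ring
      _ = b*p*(y*b) := by rw [d6]
      _ = b*(p*y)*b := by noncomm_ring
      _ = b*(y*p)*b := by rw [e1]
      _ = (b*y)*(p*b) := by noncomm_ring
      _ = (y*b)*(p*b) := by rw [d6]
      _ = y*(b*p*b) := by noncomm_ring
  have hpa : p*a = a*y + c•p := by
    rw [hp]
    calc (a*y*a)*a = (a*y)*(a*a) := by noncomm_ring
      _ = (a*y)*(1 + c•a) := by rw [ha2]
      _ = a*y + c•(a*y*a) := by rw [mul_add, mul_one, mul_smul_comm]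
  have d1 : a*y = p*a - c•p := by rw [hpa, add_sub_cancel_right]
  have d2 : a*p = y*a + c•p := by
    nth_rewrite 1 [hp]
    calc a*(a*y*a) = (a*a)*(y*a) := by noncomm_ring
      _ = (1 + c•a)*(y*a) := by rw [ha2]
      _ = y*a + c•(a*(y*a)) := by rw [add_mul, one_mul, smul_mul_assoc]
      _ = y*a + c•p := by rw [← mul_assoc, ← hp]
  have hrb : r*b = b*p + c•r := by
    rw [hr]
    calc (b*p*b)*b = (b*p)*(b*b) := by noncomm_ring
      _ = (b*p)*(1 + c•b) := by rw [hb2]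
      _ = b*p + c•(b*p*b) := by rw [mul_add, mul_one, mul_smul_comm]
      _ = b*p + c•r := by rw [← hr]
  have d3 : b*p = r*b - c•r := by rw [hrb, add_sub_cancel_right]
  have d4 : b*r = p*b + c•r := by
    nth_rewrite 1 [hr]
    calc b*(b*p*b) = (b*b)*(p*b) := by noncomm_ring
      _ = (1 + c•b)*(p*b) := by rw [hb2]
      _ = p*b + c•(b*(p*b)) := by rw [add_mul, one_mul, smul_mul_assoc]
      _ = p*b + c•r := by rw [← mul_assoc, ← hr]
  have d5 : a*r = r*a := by
    rw [hr, hp]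
    calc a*(b*(a*y*a)*b) = (a*b*a)*(y*(a*b)) := by noncomm_ring
      _ = (b*a*b)*(y*(a*b)) := by rw [hbr]
      _ = (b*a)*(b*y)*(a*b) := by noncomm_ring
      _ = (b*a)*(y*b)*(a*b) := by rw [d6]
      _ = (b*(a*y))*(b*a*b) := by noncomm_ring
      _ = (b*(a*y))*(a*b*a) := by rw [← hbr]
      _ = (b*(a*y*a)*b)*a := by noncomm_ring
  show (a*y - y*a) * (b*p - p*b) * (a*y - y*a) = (b*p - p*b) * (a*y - y*a) * (b*p - p*b)
  exact key c a b y p r ha2 hb2 hbr d1 d2 d3 d4 d5 d6 e1 e2 e3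
end

section
/- (Proposition 3(c)) Let V be a module over H_n(q), let 1 ≤ i ≤ n−1, and let v ∈ V satisfy y_i · v = a v and y_{i+1} · v = b v for scalars a, b ∈ ℂ with a ≠ b. Then the vector v' := σ_i · v + ((q − q^{-1}) b / (a − b)) v satisfies y_i · v' = b v' and y_{i+1} · v' = a v'; that is, v' is a common eigenvector with the eigenvalues of y_i and y_{i+1} interchanged. -/
/-- Proposition 3(c): if `v` is a common eigenvector of `y_i`, `y_{i+1}`
with eigenvalues `a ≠ b`, then `v' = σ_i v + ((q − q⁻¹) b / (a − b)) v` is a common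
eigenvector with the eigenvalues interchanged. -/
theorem jm_eigenvector_swap (n : ℕ) (q : ℂ) (hn : 1 ≤ n) (hq : q ≠ 0)
    (V : Type) [AddCommGroup V] [Module ℂ V]
    (ρ : HeckeAlgebra n q →ₐ[ℂ] Module.End ℂ V) (i : ℕ) (hi1 : 1 ≤ i) (hin : i ≤ n - 1)
    (v : V) (a b : ℂ) (hab : a ≠ b)
    (hva : ρ (jm n q i) v = a • v) (hvb : ρ (jm n q (i + 1)) v = b • v) :
    ρ (jm n q i) (ρ (heckeGen n q i) v + ((q - q⁻¹) * b / (a - b)) • v) =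
        b • (ρ (heckeGen n q i) v + ((q - q⁻¹) * b / (a - b)) • v) ∧
    ρ (jm n q (i + 1)) (ρ (heckeGen n q i) v + ((q - q⁻¹) * b / (a - b)) • v) =
        a • (ρ (heckeGen n q i) v + ((q - q⁻¹) * b / (a - b)) • v) := by
  obtain ⟨j, rfl⟩ : ∃ j, i = j + 1 := ⟨i - 1, by omega⟩
  have hd : (j + 1) - 1 < n - 1 := by omega
  have hab' : a - b ≠ 0 := sub_ne_zero.mpr hab
  have hquad : heckeGen n q (j + 1) * heckeGen n q (j + 1)
      = 1 + (q - q⁻¹) • heckeGen n q (j + 1) := by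
    simp only [heckeGen, dif_pos hd]
    rw [← map_mul, ← map_one (RingQuot.mkAlgHom ℂ (HeckeRel n q)), ← map_smul, ← map_add]
    exact RingQuot.mkAlgHom_rel ℂ (HeckeRel.quad ⟨(j + 1) - 1, hd⟩)
  set S := ρ (heckeGen n q (j + 1)) with hS
  set Y := ρ (jm n q (j + 1)) with hY
  have hSSE : S * S = 1 + (q - q⁻¹) • S := by
    rw [hS, ← map_mul, hquad, map_add, map_one, map_smul]
  have hSS : ∀ u : V, S (S u) = u + (q - q⁻¹) • S u := by
    intro u
    have := DFunLike.congr_fun hSSE u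
    simpa [Module.End.mul_apply] using this
  have hY' : ρ (jm n q (j + 1 + 1)) = S * Y * S := by
    show ρ (heckeGen n q (j + 1) * jm n q (j + 1) * heckeGen n q (j + 1)) = S * Y * S
    rw [map_mul, map_mul]
  rw [hY'] at hvb ⊢
  have hvb' : S (Y (S v)) = b • v := by simpa [Module.End.mul_apply] using hvb
  have key1 : Y (S v) = b • S v - ((q - q⁻¹) * b) • v := by
    have h2 : b • S v = Y (S v) + ((q - q⁻¹) * b) • v := by
      rw [← map_smul, ← hvb', hSS (Y (S v)), hvb', mul_smul]
    rw [h2]; abel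
  have key2 : (S * Y * S) (S v) = a • S v + ((q - q⁻¹) * b) • v := by
    have h0 : (S * Y * S) (S v) = S (Y (S (S v))) := by simp [Module.End.mul_apply]
    rw [h0, hSS v, map_add, map_smul, hva, key1, map_add, map_smul, map_smul, map_sub,
      map_smul, map_smul, hSS v]
    match_scalars <;> ring
  constructor
  · rw [map_add, map_smul, hva, key1]
    match_scalars
    · ring
    · field_simp
      ring
  · rw [map_add, map_smul, key2, hvb]
    match_scalars
    · ring
    · field_simp
      ring
end

section
/- Let q ∈ ℂ with q ≠ 0 and q² ≠ −1, let V be a module over H_n(q), and let 1 ≤ i ≤ n−2. If a vector v ∈ V satisfies σ_i · v = q v and σ_{i+1} · v = −q^{-1} v, then v = 0; likewise if σ_i · v = −q^{-1} v and σ_{i+1} · v = q v, then v = 0. -/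
lemma mixed_aux (V : Type) [AddCommGroup V] [Module ℂ V]
    (A B : Module.End ℂ V) (hbr : A * B * A = B * A * B) (a b : ℂ)
    (hab : a * b * a - b * a * b ≠ 0)
    (v : V) (hA : A v = a • v) (hB : B v = b • v) : v = 0 := by
  have h1 : (A * B * A) v = (a * b * a) • v := by
    simp [Module.End.mul_apply, hA, hB, map_smul, smul_smul]
    ring_nf
  have h2 : (B * A * B) v = (b * a * b) • v := by
    simp [Module.End.mul_apply, hA, hB, map_smul, smul_smul]
    ring_nf
  have h3 : (a * b * a - b * a * b) • v = 0 := by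
    rw [sub_smul, ← h1, ← h2, hbr, sub_self]
  rcases smul_eq_zero.mp h3 with h | h
  · exact absurd h hab
  · exact h

/-- no nonzero vector can be simultaneously a `q`-eigenvector of `σ_i`
and a `(−q⁻¹)`-eigenvector of `σ_{i+1}` (or vice versa), provided `q² ≠ −1`. -/
theorem no_mixed_eigenvector (n : ℕ) (q : ℂ) (hq : q ≠ 0) (hq2 : q ^ 2 ≠ -1)
    (hn : 1 ≤ n)
    (V : Type) [AddCommGroup V] [Module ℂ V]
    (ρ : HeckeAlgebra n q →ₐ[ℂ] Module.End ℂ V) (i : ℕ) (hi1 : 1 ≤ i) (hin : i ≤ n - 2)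
    (v : V) :
    ((ρ (heckeGen n q i) v = q • v ∧ ρ (heckeGen n q (i + 1)) v = (-q⁻¹) • v) → v = 0) ∧
    ((ρ (heckeGen n q i) v = (-q⁻¹) • v ∧ ρ (heckeGen n q (i + 1)) v = q • v) → v = 0) := by
  have hlt1 : i - 1 < n - 1 := by omega
  have hlt2 : i < n - 1 := by omega
  have hgi : heckeGen n q i = RingQuot.mkAlgHom ℂ (HeckeRel n q) (FreeAlgebra.ι ℂ ⟨i - 1, hlt1⟩) := by
    rw [heckeGen]; exact dif_pos hlt1
  have hgj : heckeGen n q (i + 1) = RingQuot.mkAlgHom ℂ (HeckeRel n q) (FreeAlgebra.ι ℂ ⟨i, hlt2⟩) := by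
    rw [heckeGen]; exact dif_pos hlt2
  have halg : heckeGen n q i * heckeGen n q (i + 1) * heckeGen n q i
      = heckeGen n q (i + 1) * heckeGen n q i * heckeGen n q (i + 1) := by
    rw [hgi, hgj, ← map_mul, ← map_mul, ← map_mul, ← map_mul,
      RingQuot.mkAlgHom_rel ℂ (HeckeRel.braid ⟨i - 1, hlt1⟩ ⟨i, hlt2⟩ (by simp; omega))]
  have hbr : ρ (heckeGen n q i) * ρ (heckeGen n q (i + 1)) * ρ (heckeGen n q i)
      = ρ (heckeGen n q (i + 1)) * ρ (heckeGen n q i) * ρ (heckeGen n q (i + 1)) := by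
    rw [← map_mul, ← map_mul, ← map_mul, ← map_mul, halg]
  have hne : q * (-q⁻¹) * q - (-q⁻¹) * q * (-q⁻¹) ≠ 0 := by
    intro h
    apply hq2
    field_simp at h
    linear_combination -h
  have hne' : (-q⁻¹) * q * (-q⁻¹) - q * (-q⁻¹) * q ≠ 0 := by
    intro h; exact hne (by linear_combination -h)
  constructor
  · rintro ⟨h1, h2⟩
    exact mixed_aux V _ _ hbr q (-q⁻¹) hne v h1 h2
  · rintro ⟨h1, h2⟩
    exact mixed_aux V _ _ hbr (-q⁻¹) q hne' v h1 h2
end
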